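/- Suppose Assumption 1 holds, f ∈ S⁰_{μ_f}(X) and g ∈ S⁰_{μ_g}(Y) with μ_f, μ_g ≥ 0, β_k → ∞, (ε_k) is nonincreasing with ε_k ≥ 0 and Σ_{k=1}^{∞} α_kε_k < +∞, and let (x_k, y_k, λ_k) be generated by the scheme (disc) with the implicit multiplier choice λ̄_{k+1} = λ̂_{k+1} = λ_{k+1} (Algorithm 1). Let (x*,y*,λ*) be a saddle point of L. Then lim_{k→∞} (L(x_k, y_k, λ*) − L(x*, y*, λ*)) = 0. -/

import Mathlib

open Filter Topology
open scoped RealInnerProductSpace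

private lemma inner_expand {X : Type*} [NormedAddCommGroup X] [InnerProductSpace ℝ X]
    (a c : X) : 2*⟪a - c, a⟫ = ‖a‖^2 - ‖c‖^2 + ‖a - c‖^2 := by
  simp [inner_sub_left, real_inner_self_eq_norm_sq, norm_sub_sq_real, real_inner_comm]
  ring

private lemma inner_expand3 {X : Type*} [NormedAddCommGroup X] [InnerProductSpace ℝ X]
    (a bb c : X) : 2*⟪a - bb, a - c⟫ = ‖a - c‖^2 - ‖bb - c‖^2 + ‖a - bb‖^2 := by
  have h : a - bb = (a - c) - (bb - c) := by abel
  have h2 := inner_expand (a - c) (bb - c)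
  rw [← h] at h2
  exact h2

private lemma sq_diff_le {X : Type*} [NormedAddCommGroup X] [InnerProductSpace ℝ X]
    (a c : X) : ‖a‖^2 - ‖c‖^2 ≤ 2*⟪a - c, a⟫ := by
  have h2 := inner_expand a c
  nlinarith [sq_nonneg ‖a - c‖]

set_option maxHeartbeats 2000000 in
theorem lagrangian_gap_tendsto_zero
    {X Y Z : Type*}
    [NormedAddCommGroup X] [InnerProductSpace ℝ X] [CompleteSpace X]
    [NormedAddCommGroup Y] [InnerProductSpace ℝ Y] [CompleteSpace Y]
    [NormedAddCommGroup Z] [InnerProductSpace ℝ Z] [CompleteSpace Z]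
    (f : X → ℝ) (g : Y → ℝ)
    (hfconv : ConvexOn ℝ Set.univ f) (hfcont : Continuous f)
    (hgconv : ConvexOn ℝ Set.univ g) (hgcont : Continuous g)
    (A : X →L[ℝ] Z) (B : Y →L[ℝ] Z) (b : Z)
    (μf μg : ℝ) (hμf : 0 ≤ μf) (hμg : 0 ≤ μg)
    (hfS : ∀ x u v : X, (∀ w, f w - f x ≥ ⟪v, w - x⟫) →
        f u - f x - ⟪v, u - x⟫ ≥ μf / 2 * ‖u - x‖ ^ 2)
    (hgS : ∀ y u v : Y, (∀ w, g w - g y ≥ ⟪v, w - y⟫) →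
        g u - g y - ⟪v, u - y⟫ ≥ μg / 2 * ‖u - y‖ ^ 2)
    (L : X → Y → Z → ℝ)
    (hL : ∀ x y l, L x y l = f x + g y + ⟪l, A x + B y - b⟫)
    (δ γ : ℝ) (hδ : 0 < δ) (hγ : 0 < γ)
    (α β ε : ℕ → ℝ)
    (hα : ∀ k, 1 ≤ k → 0 < α k)
    (hβpos : ∀ k, 1 ≤ k → 0 < β k)
    (hβmono : ∀ k, 1 ≤ k → β k ≤ β (k + 1))
    (hεnn : ∀ k, 1 ≤ k → 0 ≤ ε k)
    (hβtop : Tendsto β atTop atTop)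
    (x : ℕ → X) (y : ℕ → Y) (lam : ℕ → Z)
    (Zs Zd : ℕ → X) (Hs Hd : ℕ → Y)
    (hZ : ∀ k, 1 ≤ k → Zs (k + 1) = (1 / α k) • (x (k + 1) - x k) + γ • x (k + 1))
    (hZd : ∀ k, 1 ≤ k → Zd (k + 1) = δ • Zs (k + 1) + (1 - δ * γ) • x (k + 1))
    (hH : ∀ k, 1 ≤ k → Hs (k + 1) = (1 / α k) • (y (k + 1) - y k) + γ • y (k + 1))
    (hHd : ∀ k, 1 ≤ k → Hd (k + 1) = δ • Hs (k + 1) + (1 - δ * γ) • y (k + 1))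
    (hlam : ∀ k, 1 ≤ k → lam (k + 1) = lam k + (α k * β k) • (A (Zd (k + 1)) + B (Hd (k + 1)) - b))
    (hstep : ∀ k, 1 ≤ k → ∃ u v,
        (∀ w, f w - f (x (k + 1)) ≥ ⟪u, w - x (k + 1)⟫) ∧
        (∀ w, g w - g (y (k + 1)) ≥ ⟪v, w - y (k + 1)⟫) ∧
        (1 / α k) • (Zs (k + 1) - Zs k) =
          -(β k • (u + (ContinuousLinearMap.adjoint A) (lam (k + 1)) + ε k • x (k + 1)
              - μf • (x (k + 1) - Zd (k + 1)))) ∧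
        (1 / α k) • (Hs (k + 1) - Hs k) =
          -(β k • (v + (ContinuousLinearMap.adjoint B) (lam (k + 1)) + ε k • y (k + 1)
              - μg • (y (k + 1) - Hd (k + 1)))))
    (hδγ : δ * γ - 1 ≥ 0)
    (hββ : ∀ k, 1 ≤ k → δ * β (k + 1) ≤ δ * β k + α k * β k)
    (hεmono : ∀ k, 1 ≤ k → ε (k + 1) ≤ ε k)
    (hsum : Summable (fun k => α k * ε k))
    (xs : X) (ys : Y) (ls : Z)
    (hsaddle : ∀ x' y' l', L xs ys l' ≤ L xs ys ls ∧ L xs ys ls ≤ L x' y' ls)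
    :
    Tendsto (fun k => L (x k) (y k) ls - L xs ys ls) atTop (𝓝 0) := by
  -- the constraint holds at the saddle point
  have hC : A xs + B ys - b = 0 := by
    have h1 : ∀ l', ⟪l', A xs + B ys - b⟫ ≤ ⟪ls, A xs + B ys - b⟫ := by
      intro l'
      have h := (hsaddle xs ys l').1
      rw [hL, hL] at h
      linarith
    have h2 := h1 (ls + (A xs + B ys - b))
    rw [inner_add_left] at h2
    have h4 : ‖A xs + B ys - b‖^2 ≤ 0 := by
      rw [← real_inner_self_eq_norm_sq]; linarith
    have h5 : ‖A xs + B ys - b‖ = 0 := by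
      nlinarith [norm_nonneg (A xs + B ys - b)]
    exact norm_eq_zero.mp h5
  have hb' : A xs + B ys = b := by rwa [sub_eq_zero] at hC
  set G : ℕ → ℝ := fun k => f (x k) + g (y k) - f xs - g ys + ⟪ls, A (x k) + B (y k) - b⟫
    with hGdef
  have hgap : ∀ k, L (x k) (y k) ls - L xs ys ls = G k := by
    intro k
    rw [hL, hL, hC]
    simp only [hGdef, inner_zero_right]
    ring
  have hGnn : ∀ k, 0 ≤ G k := by
    intro k
    rw [← hgap k]
    have := (hsaddle (x k) (y k) ls).2
    linarith
  set p : ℕ → X := fun k => δ • Zs k + (1 - δ*γ) • x k - xs with hpdef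
  set q : ℕ → Y := fun k => δ • Hs k + (1 - δ*γ) • y k - ys with hqdef
  set E : ℕ → ℝ := fun k =>
      2*δ^2*β k*G k + δ^2*β k*ε k*(‖x k‖^2 + ‖y k‖^2) + ‖p k‖^2 + ‖q k‖^2
      + δ*‖lam k - ls‖^2 + (δ*γ - 1)*(‖x k - xs‖^2 + ‖y k - ys‖^2)
      + μf*δ^2*β k*‖x k - xs‖^2 + μg*δ^2*β k*‖y k - ys‖^2 with hEdef
  -- main one-step energy estimate
  have hkey : ∀ k, 1 ≤ k → E (k+1) ≤ E k + δ*(α k*β k*ε k)*(‖xs‖^2 + ‖ys‖^2) := by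
    intro k hk
    obtain ⟨u, v, hu, hv, hux, hvy⟩ := hstep k hk
    have ha := hα k hk
    have hb := hβpos k hk
    have he := hεnn k hk
    have ha' : α k ≠ 0 := ne_of_gt ha
    -- vector identities, x side
    have hZs1 : Zs (k+1) - Zs k
        = -((α k*β k) • (u + (ContinuousLinearMap.adjoint A) (lam (k+1)) + ε k • x (k+1)
            - μf • (x (k+1) - Zd (k+1)))) := by
      calc Zs (k+1) - Zs k = (α k) • ((1/α k) • (Zs (k+1) - Zs k)) := by
            rw [smul_smul]; field_simp; rw [one_smul]
        _ = _ := by rw [hux, smul_neg, smul_smul]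
    have hp1 : p (k+1) = (x (k+1) - xs) + (δ/α k) • (x (k+1) - x k) := by
      simp only [hpdef]
      rw [hZ k hk]
      module
    have hpZd : p (k+1) = Zd (k+1) - xs := by
      simp only [hpdef]
      rw [hZd k hk]
    have hxZd : x (k+1) - Zd (k+1) = -((δ/α k) • (x (k+1) - x k)) := by
      rw [hZd k hk, hZ k hk]
      module
    have hdp : p (k+1) - p k
        = -((δ*(α k*β k)) • (u + (ContinuousLinearMap.adjoint A) (lam (k+1)) + ε k • x (k+1)
            - μf • (x (k+1) - Zd (k+1)))) + (1 - δ*γ) • (x (k+1) - x k) := by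
      have h0 : p (k+1) - p k = δ • (Zs (k+1) - Zs k) + (1 - δ*γ) • (x (k+1) - x k) := by
        simp only [hpdef]
        module
      rw [h0, hZs1, smul_neg, smul_smul]
    -- y side vector identities
    have hHs1 : Hs (k+1) - Hs k
        = -((α k*β k) • (v + (ContinuousLinearMap.adjoint B) (lam (k+1)) + ε k • y (k+1)
            - μg • (y (k+1) - Hd (k+1)))) := by
      calc Hs (k+1) - Hs k = (α k) • ((1/α k) • (Hs (k+1) - Hs k)) := by
            rw [smul_smul]; field_simp; rw [one_smul]
        _ = _ := by rw [hvy, smul_neg, smul_smul]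
    have hq1 : q (k+1) = (y (k+1) - ys) + (δ/α k) • (y (k+1) - y k) := by
      simp only [hqdef]
      rw [hH k hk]
      module
    have hqHd : q (k+1) = Hd (k+1) - ys := by
      simp only [hqdef]
      rw [hHd k hk]
    have hyHd : y (k+1) - Hd (k+1) = -((δ/α k) • (y (k+1) - y k)) := by
      rw [hHd k hk, hH k hk]
      module
    have hdq : q (k+1) - q k
        = -((δ*(α k*β k)) • (v + (ContinuousLinearMap.adjoint B) (lam (k+1)) + ε k • y (k+1)
            - μg • (y (k+1) - Hd (k+1)))) + (1 - δ*γ) • (y (k+1) - y k) := by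
      have h0 : q (k+1) - q k = δ • (Hs (k+1) - Hs k) + (1 - δ*γ) • (y (k+1) - y k) := by
        simp only [hqdef]
        module
      rw [h0, hHs1, smul_neg, smul_smul]
    -- scalar expansions, x side
    have hIx : 2*⟪x (k+1) - x k, x (k+1) - xs⟫
        = ‖x (k+1) - xs‖^2 - ‖x k - xs‖^2 + ‖x (k+1) - x k‖^2 :=
      inner_expand3 (x (k+1)) (x k) xs
    have hMx : 2*⟪x (k+1), x (k+1) - xs⟫ = ‖x (k+1)‖^2 + ‖x (k+1) - xs‖^2 - ‖xs‖^2 := by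
      rw [real_inner_comm]
      linarith [inner_expand (x (k+1)) xs]
    have hPx : 2*⟪x (k+1), x (k+1) - x k⟫ = ‖x (k+1)‖^2 - ‖x k‖^2 + ‖x (k+1) - x k‖^2 := by
      rw [real_inner_comm]
      linarith [inner_expand (x (k+1)) (x k)]
    have hup : ⟪u, p (k+1)⟫ = ⟪u, x (k+1) - xs⟫ + (δ/α k)*⟪u, x (k+1) - x k⟫ := by
      rw [hp1, inner_add_right, real_inner_smul_right]
    have hxp : ⟪x (k+1), p (k+1)⟫
        = ⟪x (k+1), x (k+1) - xs⟫ + (δ/α k)*⟪x (k+1), x (k+1) - x k⟫ := by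
      rw [hp1, inner_add_right, real_inner_smul_right]
    have hdxp : ⟪x (k+1) - x k, p (k+1)⟫
        = ⟪x (k+1) - x k, x (k+1) - xs⟫ + (δ/α k)*‖x (k+1) - x k‖^2 := by
      rw [hp1, inner_add_right, real_inner_smul_right, real_inner_self_eq_norm_sq]
    have hmp : ⟪x (k+1) - Zd (k+1), p (k+1)⟫ = -((δ/α k)*⟪x (k+1) - x k, p (k+1)⟫) := by
      rw [hxZd, inner_neg_left, real_inner_smul_left]
    -- subgradient bounds, x side
    have hBx1 : -⟪u, x (k+1) - xs⟫ ≤ f xs - f (x (k+1)) - μf/2*‖x (k+1) - xs‖^2 := by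
      have h1 := hfS (x (k+1)) xs u hu
      rw [show xs - x (k+1) = -(x (k+1) - xs) from by abel, inner_neg_right, norm_neg] at h1
      linarith
    have hBx2 : -⟪u, x (k+1) - x k⟫ ≤ f (x k) - f (x (k+1)) := by
      have h1 := hu (x k)
      rw [show x k - x (k+1) = -(x (k+1) - x k) from by abel, inner_neg_right] at h1
      linarith
    -- scalar expansions, y side
    have hIy : 2*⟪y (k+1) - y k, y (k+1) - ys⟫
        = ‖y (k+1) - ys‖^2 - ‖y k - ys‖^2 + ‖y (k+1) - y k‖^2 :=
      inner_expand3 (y (k+1)) (y k) ys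
    have hMy : 2*⟪y (k+1), y (k+1) - ys⟫ = ‖y (k+1)‖^2 + ‖y (k+1) - ys‖^2 - ‖ys‖^2 := by
      rw [real_inner_comm]
      linarith [inner_expand (y (k+1)) ys]
    have hPy : 2*⟪y (k+1), y (k+1) - y k⟫ = ‖y (k+1)‖^2 - ‖y k‖^2 + ‖y (k+1) - y k‖^2 := by
      rw [real_inner_comm]
      linarith [inner_expand (y (k+1)) (y k)]
    have hvq : ⟪v, q (k+1)⟫ = ⟪v, y (k+1) - ys⟫ + (δ/α k)*⟪v, y (k+1) - y k⟫ := by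
      rw [hq1, inner_add_right, real_inner_smul_right]
    have hyq : ⟪y (k+1), q (k+1)⟫
        = ⟪y (k+1), y (k+1) - ys⟫ + (δ/α k)*⟪y (k+1), y (k+1) - y k⟫ := by
      rw [hq1, inner_add_right, real_inner_smul_right]
    have hdyq : ⟪y (k+1) - y k, q (k+1)⟫
        = ⟪y (k+1) - y k, y (k+1) - ys⟫ + (δ/α k)*‖y (k+1) - y k‖^2 := by
      rw [hq1, inner_add_right, real_inner_smul_right, real_inner_self_eq_norm_sq]
    have hmq : ⟪y (k+1) - Hd (k+1), q (k+1)⟫ = -((δ/α k)*⟪y (k+1) - y k, q (k+1)⟫) := by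
      rw [hyHd, inner_neg_left, real_inner_smul_left]
    have hBy1 : -⟪v, y (k+1) - ys⟫ ≤ g ys - g (y (k+1)) - μg/2*‖y (k+1) - ys‖^2 := by
      have h1 := hgS (y (k+1)) ys v hv
      rw [show ys - y (k+1) = -(y (k+1) - ys) from by abel, inner_neg_right, norm_neg] at h1
      linarith
    have hBy2 : -⟪v, y (k+1) - y k⟫ ≤ g (y k) - g (y (k+1)) := by
      have h1 := hv (y k)
      rw [show y k - y (k+1) = -(y (k+1) - y k) from by abel, inner_neg_right] at h1
      linarith
    -- lambda part
    have hADJ : ⟪(ContinuousLinearMap.adjoint A) (lam (k+1)), p (k+1)⟫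
        + ⟪(ContinuousLinearMap.adjoint B) (lam (k+1)), q (k+1)⟫
        = ⟪lam (k+1), A (Zd (k+1)) + B (Hd (k+1)) - b⟫ := by
      rw [ContinuousLinearMap.adjoint_inner_left, ContinuousLinearMap.adjoint_inner_left,
        ← inner_add_right]
      congr 1
      rw [hpZd, hqHd, map_sub, map_sub, ← hb']
      abel
    have hdlam : lam (k+1) - lam k = (α k*β k) • (A (Zd (k+1)) + B (Hd (k+1)) - b) := by
      rw [hlam k hk]
      abel
    have hΛ : ⟪lam (k+1), lam (k+1) - lam k⟫
        = (α k*β k)*⟪lam (k+1), A (Zd (k+1)) + B (Hd (k+1)) - b⟫ := by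
      rw [hdlam, real_inner_smul_right]
    have hQl : 2*⟪lam (k+1) - ls, lam (k+1) - lam k⟫
        = ‖lam (k+1) - ls‖^2 - ‖lam k - ls‖^2 + ‖lam (k+1) - lam k‖^2 := by
      rw [real_inner_comm]
      exact inner_expand3 (lam (k+1)) (lam k) ls
    have hlsplit : ⟪lam (k+1), lam (k+1) - lam k⟫
        = ⟪lam (k+1) - ls, lam (k+1) - lam k⟫ + ⟪ls, lam (k+1) - lam k⟫ := by
      rw [← inner_add_left, sub_add_cancel]
    have hlsd : ⟪ls, lam (k+1) - lam k⟫
        = (α k*β k)*⟪ls, A (Zd (k+1)) + B (Hd (k+1)) - b⟫ := by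
      rw [hdlam, real_inner_smul_right]
    have hlsrel : (α k)*⟪ls, A (Zd (k+1)) + B (Hd (k+1)) - b⟫
        = (α k)*⟪ls, A (x (k+1)) + B (y (k+1)) - b⟫
          + δ*(⟪ls, A (x (k+1)) + B (y (k+1)) - b⟫ - ⟪ls, A (x k) + B (y k) - b⟫) := by
      have hv2 : (α k) • (A (Zd (k+1)) + B (Hd (k+1)) - b)
          = (α k) • (A (x (k+1)) + B (y (k+1)) - b)
            + δ • ((A (x (k+1)) + B (y (k+1)) - b) - (A (x k) + B (y k) - b)) := by
        have e1 : Zd (k+1) = x (k+1) + (δ/α k) • (x (k+1) - x k) := by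
          rw [hZd k hk, hZ k hk]; module
        have e2 : Hd (k+1) = y (k+1) + (δ/α k) • (y (k+1) - y k) := by
          rw [hHd k hk, hH k hk]; module
        rw [e1, e2, map_add, map_add, map_smul, map_smul, map_sub A, map_sub B]
        match_scalars <;> field_simp <;> ring
      calc (α k)*⟪ls, A (Zd (k+1)) + B (Hd (k+1)) - b⟫
          = ⟪ls, (α k) • (A (Zd (k+1)) + B (Hd (k+1)) - b)⟫ := (real_inner_smul_right _ _ _).symm
        _ = ⟪ls, (α k) • (A (x (k+1)) + B (y (k+1)) - b)⟫
            + ⟪ls, δ • ((A (x (k+1)) + B (y (k+1)) - b) - (A (x k) + B (y k) - b))⟫ := by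
              rw [hv2, inner_add_right]
        _ = _ := by
              simp only [real_inner_smul_right, inner_sub_right]
    -- positivity helpers
    have hC1 : (0:ℝ) < δ*(α k*β k) := mul_pos hδ (mul_pos ha hb)
    have hC2 : (0:ℝ) < δ^2*β k := mul_pos (pow_pos hδ 2) hb
    have hc0 : (0:ℝ) ≤ δ/α k := div_nonneg hδ.le ha.le
    -- expansions of the inner products of increments
    have hExp : 2*⟪p (k+1) - p k, p (k+1)⟫
        = -(2*(δ*(α k*β k)))*⟪u, p (k+1)⟫
          - (2*(δ*(α k*β k)))*⟪(ContinuousLinearMap.adjoint A) (lam (k+1)), p (k+1)⟫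
          - (2*(δ*(α k*β k)))*(ε k*⟪x (k+1), p (k+1)⟫)
          + 2*(δ*(α k*β k))*(μf*⟪x (k+1) - Zd (k+1), p (k+1)⟫)
          + 2*(1-δ*γ)*⟪x (k+1) - x k, p (k+1)⟫ := by
      rw [hdp, inner_add_left, inner_neg_left, real_inner_smul_left, inner_sub_left,
        inner_add_left, inner_add_left, real_inner_smul_left, real_inner_smul_left,
        real_inner_smul_left]
      ring
    have hExpy : 2*⟪q (k+1) - q k, q (k+1)⟫
        = -(2*(δ*(α k*β k)))*⟪v, q (k+1)⟫
          - (2*(δ*(α k*β k)))*⟪(ContinuousLinearMap.adjoint B) (lam (k+1)), q (k+1)⟫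
          - (2*(δ*(α k*β k)))*(ε k*⟪y (k+1), q (k+1)⟫)
          + 2*(δ*(α k*β k))*(μg*⟪y (k+1) - Hd (k+1), q (k+1)⟫)
          + 2*(1-δ*γ)*⟪y (k+1) - y k, q (k+1)⟫ := by
      rw [hdq, inner_add_left, inner_neg_left, real_inner_smul_left, inner_sub_left,
        inner_add_left, inner_add_left, real_inner_smul_left, real_inner_smul_left,
        real_inner_smul_left]
      ring
    -- multiplied bounds, x side
    have m1x : -(2*(δ*(α k*β k)))*⟪u, p (k+1)⟫
        ≤ 2*(δ*(α k*β k))*(f xs - f (x (k+1))) - δ*(α k*β k)*μf*‖x (k+1) - xs‖^2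
          + 2*(δ^2*β k)*(f (x k) - f (x (k+1))) := by
      have e0 : -(2*(δ*(α k*β k)))*⟪u, p (k+1)⟫
          = 2*(δ*(α k*β k))*(-⟪u, x (k+1) - xs⟫) + 2*(δ^2*β k)*(-⟪u, x (k+1) - x k⟫) := by
        rw [hup]; field_simp; ring
      have i1 := mul_le_mul_of_nonneg_left hBx1 (by linarith only [hC1] : (0:ℝ) ≤ 2*(δ*(α k*β k)))
      have i2 := mul_le_mul_of_nonneg_left hBx2 (by linarith only [hC2] : (0:ℝ) ≤ 2*(δ^2*β k))
      linarith only [e0, i1, i2]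
    have m2x : -(2*(δ*(α k*β k)))*(ε k*⟪x (k+1), p (k+1)⟫)
        ≤ δ*(α k*β k)*ε k*‖xs‖^2 - δ*(α k*β k)*ε k*‖x (k+1)‖^2
          - δ^2*β k*ε k*(‖x (k+1)‖^2 - ‖x k‖^2) := by
      have e0 : -(2*(δ*(α k*β k)))*(ε k*⟪x (k+1), p (k+1)⟫)
          = -(δ*(α k*β k)*ε k)*(2*⟪x (k+1), x (k+1) - xs⟫)
            - (δ^2*β k*ε k)*(2*⟪x (k+1), x (k+1) - x k⟫) := by
        rw [hxp]; field_simp; ring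
      rw [hMx, hPx] at e0
      have t1 : 0 ≤ δ*(α k*β k)*ε k*‖x (k+1) - xs‖^2 :=
        mul_nonneg (mul_nonneg hC1.le he) (sq_nonneg _)
      have t2 : 0 ≤ δ^2*β k*ε k*‖x (k+1) - x k‖^2 :=
        mul_nonneg (mul_nonneg hC2.le he) (sq_nonneg _)
      linarith only [e0, t1, t2]
    have m3x : 2*(δ*(α k*β k))*(μf*⟪x (k+1) - Zd (k+1), p (k+1)⟫)
        ≤ δ^2*β k*μf*(‖x k - xs‖^2 - ‖x (k+1) - xs‖^2) := by
      have e0 : 2*(δ*(α k*β k))*(μf*⟪x (k+1) - Zd (k+1), p (k+1)⟫)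
          = -((δ^2*β k*μf)*(2*⟪x (k+1) - x k, x (k+1) - xs⟫))
            - 2*(δ^2*β k*μf*(δ/α k))*‖x (k+1) - x k‖^2 := by
        rw [hmp, hdxp]; field_simp; ring
      rw [hIx] at e0
      have t1 : 0 ≤ δ^2*β k*μf*‖x (k+1) - x k‖^2 :=
        mul_nonneg (mul_nonneg hC2.le hμf) (sq_nonneg _)
      have t2 : 0 ≤ δ^2*β k*μf*(δ/α k)*‖x (k+1) - x k‖^2 :=
        mul_nonneg (mul_nonneg (mul_nonneg hC2.le hμf) hc0) (sq_nonneg _)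
      linarith only [e0, t1, t2]
    have m4x : 2*(1-δ*γ)*⟪x (k+1) - x k, p (k+1)⟫
        ≤ (1-δ*γ)*(‖x (k+1) - xs‖^2 - ‖x k - xs‖^2) := by
      have e0 : 2*(1-δ*γ)*⟪x (k+1) - x k, p (k+1)⟫
          = (1-δ*γ)*(2*⟪x (k+1) - x k, x (k+1) - xs⟫) + 2*((1-δ*γ)*(δ/α k))*‖x (k+1) - x k‖^2 := by
        rw [hdxp]; ring
      rw [hIx] at e0
      have hng : (0:ℝ) ≤ -(1 - δ*γ) := by linarith only [hδγ]
      have t1 : 0 ≤ -(1-δ*γ)*‖x (k+1) - x k‖^2 := mul_nonneg hng (sq_nonneg _)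
      have t2 : 0 ≤ -(1-δ*γ)*(δ/α k)*‖x (k+1) - x k‖^2 :=
        mul_nonneg (mul_nonneg hng hc0) (sq_nonneg _)
      linarith only [e0, t1, t2]
    -- multiplied bounds, y side
    have m1y : -(2*(δ*(α k*β k)))*⟪v, q (k+1)⟫
        ≤ 2*(δ*(α k*β k))*(g ys - g (y (k+1))) - δ*(α k*β k)*μg*‖y (k+1) - ys‖^2
          + 2*(δ^2*β k)*(g (y k) - g (y (k+1))) := by
      have e0 : -(2*(δ*(α k*β k)))*⟪v, q (k+1)⟫
          = 2*(δ*(α k*β k))*(-⟪v, y (k+1) - ys⟫) + 2*(δ^2*β k)*(-⟪v, y (k+1) - y k⟫) := by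
        rw [hvq]; field_simp; ring
      have i1 := mul_le_mul_of_nonneg_left hBy1 (by linarith only [hC1] : (0:ℝ) ≤ 2*(δ*(α k*β k)))
      have i2 := mul_le_mul_of_nonneg_left hBy2 (by linarith only [hC2] : (0:ℝ) ≤ 2*(δ^2*β k))
      linarith only [e0, i1, i2]
    have m2y : -(2*(δ*(α k*β k)))*(ε k*⟪y (k+1), q (k+1)⟫)
        ≤ δ*(α k*β k)*ε k*‖ys‖^2 - δ*(α k*β k)*ε k*‖y (k+1)‖^2
          - δ^2*β k*ε k*(‖y (k+1)‖^2 - ‖y k‖^2) := by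
      have e0 : -(2*(δ*(α k*β k)))*(ε k*⟪y (k+1), q (k+1)⟫)
          = -(δ*(α k*β k)*ε k)*(2*⟪y (k+1), y (k+1) - ys⟫)
            - (δ^2*β k*ε k)*(2*⟪y (k+1), y (k+1) - y k⟫) := by
        rw [hyq]; field_simp; ring
      rw [hMy, hPy] at e0
      have t1 : 0 ≤ δ*(α k*β k)*ε k*‖y (k+1) - ys‖^2 :=
        mul_nonneg (mul_nonneg hC1.le he) (sq_nonneg _)
      have t2 : 0 ≤ δ^2*β k*ε k*‖y (k+1) - y k‖^2 :=
        mul_nonneg (mul_nonneg hC2.le he) (sq_nonneg _)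
      linarith only [e0, t1, t2]
    have m3y : 2*(δ*(α k*β k))*(μg*⟪y (k+1) - Hd (k+1), q (k+1)⟫)
        ≤ δ^2*β k*μg*(‖y k - ys‖^2 - ‖y (k+1) - ys‖^2) := by
      have e0 : 2*(δ*(α k*β k))*(μg*⟪y (k+1) - Hd (k+1), q (k+1)⟫)
          = -((δ^2*β k*μg)*(2*⟪y (k+1) - y k, y (k+1) - ys⟫))
            - 2*(δ^2*β k*μg*(δ/α k))*‖y (k+1) - y k‖^2 := by
        rw [hmq, hdyq]; field_simp; ring
      rw [hIy] at e0
      have t1 : 0 ≤ δ^2*β k*μg*‖y (k+1) - y k‖^2 :=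
        mul_nonneg (mul_nonneg hC2.le hμg) (sq_nonneg _)
      have t2 : 0 ≤ δ^2*β k*μg*(δ/α k)*‖y (k+1) - y k‖^2 :=
        mul_nonneg (mul_nonneg (mul_nonneg hC2.le hμg) hc0) (sq_nonneg _)
      linarith only [e0, t1, t2]
    have m4y : 2*(1-δ*γ)*⟪y (k+1) - y k, q (k+1)⟫
        ≤ (1-δ*γ)*(‖y (k+1) - ys‖^2 - ‖y k - ys‖^2) := by
      have e0 : 2*(1-δ*γ)*⟪y (k+1) - y k, q (k+1)⟫
          = (1-δ*γ)*(2*⟪y (k+1) - y k, y (k+1) - ys⟫) + 2*((1-δ*γ)*(δ/α k))*‖y (k+1) - y k‖^2 := by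
        rw [hdyq]; ring
      rw [hIy] at e0
      have hng : (0:ℝ) ≤ -(1 - δ*γ) := by linarith only [hδγ]
      have t1 : 0 ≤ -(1-δ*γ)*‖y (k+1) - y k‖^2 := mul_nonneg hng (sq_nonneg _)
      have t2 : 0 ≤ -(1-δ*γ)*(δ/α k)*‖y (k+1) - y k‖^2 :=
        mul_nonneg (mul_nonneg hng hc0) (sq_nonneg _)
      linarith only [e0, t1, t2]
    -- multiplied bound, lambda part
    have m5 : -(2*(δ*(α k*β k)))*(⟪(ContinuousLinearMap.adjoint A) (lam (k+1)), p (k+1)⟫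
          + ⟪(ContinuousLinearMap.adjoint B) (lam (k+1)), q (k+1)⟫)
        ≤ -(δ*(‖lam (k+1) - ls‖^2 - ‖lam k - ls‖^2))
          - 2*(δ*(α k*β k))*⟪ls, A (x (k+1)) + B (y (k+1)) - b⟫
          - 2*(δ^2*β k)*(⟪ls, A (x (k+1)) + B (y (k+1)) - b⟫ - ⟪ls, A (x k) + B (y k) - b⟫) := by
      have e0 : -(2*(δ*(α k*β k)))*(⟪(ContinuousLinearMap.adjoint A) (lam (k+1)), p (k+1)⟫
            + ⟪(ContinuousLinearMap.adjoint B) (lam (k+1)), q (k+1)⟫)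
          = -(2*δ)*⟪lam (k+1), lam (k+1) - lam k⟫ := by
        rw [hADJ, hΛ]; ring
      have e2 : -(2*δ)*⟪lam (k+1), lam (k+1) - lam k⟫
          = -δ*(2*⟪lam (k+1) - ls, lam (k+1) - lam k⟫)
            - 2*δ*β k*((α k)*⟪ls, A (Zd (k+1)) + B (Hd (k+1)) - b⟫) := by
        rw [hlsplit, hlsd]; ring
      rw [hQl, hlsrel] at e2
      have t1 : 0 ≤ δ*‖lam (k+1) - lam k‖^2 := mul_nonneg hδ.le (sq_nonneg _)
      linarith only [e0, e2, t1]
    -- norm difference inequalities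
    have hnp := sq_diff_le (p (k+1)) (p k)
    have hnq := sq_diff_le (q (k+1)) (q k)
    -- gap coefficient bookkeeping
    have hββ2 : δ^2*β (k+1) ≤ δ^2*β k + δ*(α k*β k) := by
      have := mul_le_mul_of_nonneg_left (hββ k hk) hδ.le
      linarith only [this]
    have hGnn1 : 0 ≤ f (x (k+1)) + g (y (k+1)) - f xs - g ys
        + ⟪ls, A (x (k+1)) + B (y (k+1)) - b⟫ := by
      have h0 := hGnn (k+1)
      simp only [hGdef] at h0
      exact h0
    have hGap : 2*δ^2*β (k+1)*(f (x (k+1)) + g (y (k+1)) - f xs - g ys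
          + ⟪ls, A (x (k+1)) + B (y (k+1)) - b⟫)
        ≤ (2*δ^2*β k + 2*(δ*(α k*β k)))*(f (x (k+1)) + g (y (k+1)) - f xs - g ys
          + ⟪ls, A (x (k+1)) + B (y (k+1)) - b⟫) := by
      have := mul_le_mul_of_nonneg_right hββ2 hGnn1
      linarith only [this]
    have hβ1 := hβpos (k+1) (by omega)
    have hε1 := hεnn (k+1) (by omega)
    have hRc : δ^2*β (k+1)*ε (k+1) ≤ (δ^2*β k + δ*(α k*β k))*ε k := by
      have s1 : δ^2*β (k+1)*ε (k+1) ≤ δ^2*β (k+1)*ε k :=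
        mul_le_mul_of_nonneg_left (hεmono k hk) (mul_nonneg (pow_pos hδ 2).le hβ1.le)
      have s2 : δ^2*β (k+1)*ε k ≤ (δ^2*β k + δ*(α k*β k))*ε k :=
        mul_le_mul_of_nonneg_right hββ2 he
      linarith only [s1, s2]
    have hR : δ^2*β (k+1)*ε (k+1)*(‖x (k+1)‖^2 + ‖y (k+1)‖^2)
        ≤ (δ^2*β k + δ*(α k*β k))*ε k*(‖x (k+1)‖^2 + ‖y (k+1)‖^2) :=
      mul_le_mul_of_nonneg_right hRc (by positivity)
    have hMux : μf*δ^2*β (k+1)*‖x (k+1) - xs‖^2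
        ≤ μf*(δ^2*β k + δ*(α k*β k))*‖x (k+1) - xs‖^2 := by
      have := mul_le_mul_of_nonneg_right hββ2 (mul_nonneg hμf (sq_nonneg ‖x (k+1) - xs‖))
      linarith only [this]
    have hMuy : μg*δ^2*β (k+1)*‖y (k+1) - ys‖^2
        ≤ μg*(δ^2*β k + δ*(α k*β k))*‖y (k+1) - ys‖^2 := by
      have := mul_le_mul_of_nonneg_right hββ2 (mul_nonneg hμg (sq_nonneg ‖y (k+1) - ys‖))
      linarith only [this]
    -- combined core inequality
    have core : ‖p (k+1)‖^2 + ‖q (k+1)‖^2 - ‖p k‖^2 - ‖q k‖^2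
        ≤ 2*(δ*(α k*β k))*(f xs - f (x (k+1))) - δ*(α k*β k)*μf*‖x (k+1) - xs‖^2
            + 2*(δ^2*β k)*(f (x k) - f (x (k+1)))
          + 2*(δ*(α k*β k))*(g ys - g (y (k+1))) - δ*(α k*β k)*μg*‖y (k+1) - ys‖^2
            + 2*(δ^2*β k)*(g (y k) - g (y (k+1)))
          + δ*(α k*β k)*ε k*‖xs‖^2 - δ*(α k*β k)*ε k*‖x (k+1)‖^2
            - δ^2*β k*ε k*(‖x (k+1)‖^2 - ‖x k‖^2)
          + δ*(α k*β k)*ε k*‖ys‖^2 - δ*(α k*β k)*ε k*‖y (k+1)‖^2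
            - δ^2*β k*ε k*(‖y (k+1)‖^2 - ‖y k‖^2)
          + δ^2*β k*μf*(‖x k - xs‖^2 - ‖x (k+1) - xs‖^2)
          + δ^2*β k*μg*(‖y k - ys‖^2 - ‖y (k+1) - ys‖^2)
          + (1-δ*γ)*(‖x (k+1) - xs‖^2 - ‖x k - xs‖^2)
          + (1-δ*γ)*(‖y (k+1) - ys‖^2 - ‖y k - ys‖^2)
          - δ*(‖lam (k+1) - ls‖^2 - ‖lam k - ls‖^2)
          - 2*(δ*(α k*β k))*⟪ls, A (x (k+1)) + B (y (k+1)) - b⟫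
          - 2*(δ^2*β k)*(⟪ls, A (x (k+1)) + B (y (k+1)) - b⟫ - ⟪ls, A (x k) + B (y k) - b⟫) := by
      linarith only [hnp, hnq, hExp, hExpy, m1x, m2x, m3x, m4x, m1y, m2y, m3y, m4y, m5]
    -- assembly
    simp only [hEdef, hGdef]
    linarith only [core, hGap, hR, hMux, hMuy]

  -- energy bound by induction
  have hEb : ∀ K, 1 ≤ K →
      E K ≤ E 1 + δ*(‖xs‖^2 + ‖ys‖^2)*(∑ j ∈ Finset.Ico 1 K, α j*β j*ε j) := by
    intro K hK
    induction K with
    | zero => omega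
    | succ n ih =>
      rcases Nat.lt_or_ge n 1 with h|hn
      · have : n = 0 := by omega
        subst this
        simp
      · have h1 := hkey n hn
        have h2 := ih hn
        have hsplit : ∑ j ∈ Finset.Ico 1 (n+1), α j*β j*ε j
            = (∑ j ∈ Finset.Ico 1 n, α j*β j*ε j) + α n*β n*ε n :=
          Finset.sum_Ico_succ_top hn _
        rw [hsplit]
        nlinarith [h1, h2]
  -- lower bound of the energy
  have hElow : ∀ K, 1 ≤ K → 2*δ^2*β K*G K ≤ E K := by
    intro K hK
    have hb := hβpos K hK
    have he := hεnn K hK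
    have t1 : 0 ≤ δ^2*β K*ε K*(‖x K‖^2 + ‖y K‖^2) := by
      apply mul_nonneg (mul_nonneg (mul_nonneg (by positivity) hb.le) he)
      positivity
    have t2 : 0 ≤ (δ*γ - 1)*(‖x K - xs‖^2 + ‖y K - ys‖^2) := by
      apply mul_nonneg (by linarith) (by positivity)
    have t3 : 0 ≤ μf*δ^2*β K*‖x K - xs‖^2 := by
      apply mul_nonneg (mul_nonneg (mul_nonneg hμf (by positivity)) hb.le) (by positivity)
    have t4 : 0 ≤ μg*δ^2*β K*‖y K - ys‖^2 := by
      apply mul_nonneg (mul_nonneg (mul_nonneg hμg (by positivity)) hb.le) (by positivity)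
    have t5 : 0 ≤ ‖p K‖^2 := by positivity
    have t6 : 0 ≤ ‖q K‖^2 := by positivity
    have t7 : 0 ≤ δ*‖lam K - ls‖^2 := by positivity
    simp only [hEdef]
    linarith
  have hbound : ∀ K, 1 ≤ K → 2*δ^2*β K*G K
      ≤ E 1 + δ*(‖xs‖^2 + ‖ys‖^2)*(∑ j ∈ Finset.Ico 1 K, α j*β j*ε j) :=
    fun K hK => le_trans (hElow K hK) (hEb K hK)
  have hfun : (fun k => L (x k) (y k) ls - L xs ys ls) = G := funext hgap
  rw [hfun]
  have hβmono' : ∀ i j, 1 ≤ i → i ≤ j → β i ≤ β j := by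
    intro i j hi hij
    induction j with
    | zero => omega
    | succ n ih =>
      rcases Nat.lt_or_ge n i with h|h
      · have : i = n + 1 := by omega
        rw [this]
      · exact le_trans (ih h) (hβmono n (by omega))
  rw [Metric.tendsto_atTop]
  intro η hη
  obtain ⟨S, hSdef⟩ : ∃ s : ℝ, s = ‖xs‖^2 + ‖ys‖^2 := ⟨_, rfl⟩
  have hS : 0 ≤ S := by rw [hSdef]; positivity
  obtain ⟨E1, hE1def⟩ : ∃ e : ℝ, e = E 1 := ⟨_, rfl⟩
  have hbound' : ∀ K, 1 ≤ K → 2*δ^2*β K*G K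
      ≤ E1 + δ*S*(∑ j ∈ Finset.Ico 1 K, α j*β j*ε j) := by
    intro K hK
    rw [hE1def, hSdef]
    exact hbound K hK
  have hps := hsum.hasSum.tendsto_sum_nat
  have hcauchy := hps.cauchySeq
  rw [Metric.cauchySeq_iff'] at hcauchy
  obtain ⟨η', hη'pos, hkeyS⟩ : ∃ t : ℝ, 0 < t ∧ δ*S*(2*t) ≤ δ^2*η/2 := by
    have h1 : (0:ℝ) < S + 1 := by linarith
    refine ⟨δ*η/(4*(S+1)), div_pos (mul_pos hδ hη) (by linarith), ?_⟩
    have h2 : δ*S*(2*(δ*η/(4*(S+1)))) = δ^2*η*S/(2*(S+1)) := by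
      field_simp
      ring
    rw [h2, div_le_div_iff₀ (by linarith) (by norm_num)]
    nlinarith [mul_pos (mul_pos hδ hδ) hη, hS]
  obtain ⟨N0, hN0⟩ := hcauchy η' hη'pos
  obtain ⟨m, hm1, hmN0⟩ : ∃ m, 1 ≤ m ∧ N0 ≤ m := ⟨N0+1, by omega, by omega⟩
  have htail : ∀ K, m ≤ K → ∑ j ∈ Finset.Ico m K, α j*ε j ≤ 2*η' := by
    intro K hK
    have e1 : ∑ j ∈ Finset.Ico m K, α j*ε j
        = (∑ j ∈ Finset.range K, α j*ε j) - (∑ j ∈ Finset.range m, α j*ε j) :=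
      Finset.sum_Ico_eq_sub _ (by omega)
    have d1 := hN0 K (by omega)
    have d2 := hN0 m (by omega)
    rw [Real.dist_eq] at d1 d2
    have a1 := abs_lt.mp d1
    have a2 := abs_lt.mp d2
    rw [e1]
    linarith only [a1.1, a1.2, a2.1, a2.2]
  obtain ⟨Cm, hCmdef⟩ : ∃ c : ℝ, c = ∑ j ∈ Finset.Ico 1 m, α j*ε j := ⟨_, rfl⟩
  have hCm : 0 ≤ Cm := by
    rw [hCmdef]
    exact Finset.sum_nonneg (by
      intro j hj
      rw [Finset.mem_Ico] at hj
      exact mul_nonneg (hα j hj.1).le (hεnn j hj.1))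
  have hT : ∀ K, m ≤ K → ∑ j ∈ Finset.Ico 1 K, α j*β j*ε j ≤ β m*Cm + β K*(2*η') := by
    intro K hK
    rw [hCmdef]
    have hsplit : (∑ j ∈ Finset.Ico 1 m, α j*β j*ε j) + (∑ j ∈ Finset.Ico m K, α j*β j*ε j)
        = ∑ j ∈ Finset.Ico 1 K, α j*β j*ε j :=
      Finset.sum_Ico_consecutive _ hm1 hK
    have h1 : ∑ j ∈ Finset.Ico 1 m, α j*β j*ε j ≤ β m*(∑ j ∈ Finset.Ico 1 m, α j*ε j) := by
      rw [Finset.mul_sum]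
      apply Finset.sum_le_sum
      intro j hj
      rw [Finset.mem_Ico] at hj
      have hβj : β j ≤ β m := hβmono' j m hj.1 hj.2.le
      have haj : 0 ≤ α j*ε j := mul_nonneg (hα j hj.1).le (hεnn j hj.1)
      calc α j*β j*ε j = β j*(α j*ε j) := by ring
        _ ≤ β m*(α j*ε j) := mul_le_mul_of_nonneg_right hβj haj
    have h2 : ∑ j ∈ Finset.Ico m K, α j*β j*ε j ≤ β K*(∑ j ∈ Finset.Ico m K, α j*ε j) := by
      rw [Finset.mul_sum]
      apply Finset.sum_le_sum
      intro j hj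
      rw [Finset.mem_Ico] at hj
      have hβj : β j ≤ β K := hβmono' j K (by omega) hj.2.le
      have haj : 0 ≤ α j*ε j := mul_nonneg (hα j (by omega)).le (hεnn j (by omega))
      calc α j*β j*ε j = β j*(α j*ε j) := by ring
        _ ≤ β K*(α j*ε j) := mul_le_mul_of_nonneg_right hβj haj
    have h3 : β K*(∑ j ∈ Finset.Ico m K, α j*ε j) ≤ β K*(2*η') :=
      mul_le_mul_of_nonneg_left (htail K hK) (hβpos K (by omega)).le
    linarith only [hsplit, h1, h2, h3]
  have hβtop2 : Tendsto (fun k => δ^2*η*β k) atTop atTop :=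
    Tendsto.const_mul_atTop (by positivity : (0:ℝ) < δ^2*η) hβtop
  obtain ⟨N1, hN1⟩ :=
    (hβtop2.eventually_ge_atTop (|E1| + δ*S*(β m)*Cm + 1)).exists_forall_of_atTop
  refine ⟨max m N1, fun K hK => ?_⟩
  have hKm : m ≤ K := le_trans (le_max_left _ _) hK
  have hK1 : 1 ≤ K := by omega
  have hβK := hβpos K hK1
  have hMK : |E1| + δ*S*(β m)*Cm + 1 ≤ δ^2*η*β K := hN1 K (le_trans (le_max_right _ _) hK)
  have F1 := hbound' K hK1
  have F2 := mul_le_mul_of_nonneg_left (hT K hKm) (mul_nonneg hδ.le hS)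
  have F3 : β K*(δ*S*(2*η')) ≤ β K*(δ^2*η/2) := mul_le_mul_of_nonneg_left hkeyS hβK.le
  have F5 : E1 ≤ |E1| := le_abs_self E1
  rw [Real.dist_eq, sub_zero, abs_of_nonneg (hGnn K)]
  by_contra hcon
  push_neg at hcon
  have F6 := mul_le_mul_of_nonneg_left hcon (show (0:ℝ) ≤ 2*δ^2*β K by positivity)
  have F7 : 0 < δ^2*η*β K := by positivity
  linarith only [F1, F2, F3, hMK, F5, F6, F7]
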